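/- Let X be a nonnegative random variable with cumulative distribution function F and finite mean E[X] = ∫₀^∞ (1 − F(x)) dx. Then for every m ∈ ℕ, the cumulative entropy of X satisfies the upper bound 𝓒𝓔(X) ≤ E[X] − Σ_{n=1}^m μ_{1:n+1}/(n(n+1)). -/

import Mathlib

open MeasureTheory ProbabilityTheory Set

lemma key_hasSum {u : ℝ} (h0 : 0 ≤ u) (h1 : u < 1) :
    HasSum (fun n : ℕ => u ^ (n + 2) / (((n:ℝ) + 1) * ((n:ℝ) + 2)))
      (u + (1 - u) * Real.log (1 - u)) := by
  have habs : |u| < 1 := by rw [abs_of_nonneg h0]; exact h1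
  have h1' := Real.hasSum_pow_div_log_of_abs_lt_one habs
  have h3 : HasSum (fun n : ℕ => u * (u ^ (n + 1) / ((n:ℝ) + 1)))
      (u * (-Real.log (1 - u))) := h1'.mul_left u
  have h4 : HasSum (fun n : ℕ => u ^ ((n + 1) + 1) / (((n:ℝ) + 1) + 1))
      (-Real.log (1 - u) - u) := by
    have := (hasSum_nat_add_iff' (f := fun n : ℕ => u ^ (n + 1) / ((n:ℝ) + 1)) 1).2 h1'
    simpa using this
  have h5 := h3.sub h4
  have hfun : (fun n : ℕ => u ^ (n + 2) / (((n:ℝ) + 1) * ((n:ℝ) + 2)))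
      = fun n : ℕ => u * (u ^ (n + 1) / ((n:ℝ) + 1)) - u ^ ((n + 1) + 1) / (((n:ℝ) + 1) + 1) := by
    funext n
    have hn1 : ((n:ℝ) + 1) ≠ 0 := by positivity
    have hn2 : ((n:ℝ) + 2) ≠ 0 := by positivity
    field_simp
    ring
  rw [hfun]
  convert h5 using 1
  · rfl
  ring

lemma ptwise (m : ℕ) {p : ℝ} (h0 : 0 ≤ p) (h1 : p ≤ 1) :
    -(p * Real.log p) ≤ (1 - p) - ∑ n ∈ Finset.range m,
      (1 - p) ^ (n + 2) / (((n:ℝ) + 1) * ((n:ℝ) + 2)) := by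
  rcases eq_or_lt_of_le h0 with hp | hp
  · -- p = 0
    have hp0 : p = 0 := hp.symm
    subst hp0
    have htel : ∑ n ∈ Finset.range m, (1 - (0:ℝ)) ^ (n + 2) / (((n:ℝ) + 1) * ((n:ℝ) + 2))
        = 1 - 1 / ((m:ℝ) + 1) := by
      have : ∀ n ∈ Finset.range m, (1 - (0:ℝ)) ^ (n + 2) / (((n:ℝ) + 1) * ((n:ℝ) + 2))
          = 1 / ((n:ℝ) + 1) - 1 / (((n:ℝ) + 1) + 1) := by
        intro n _
        have hn1 : ((n:ℝ) + 1) ≠ 0 := by positivity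
        have hn2 : ((n:ℝ) + 1 + 1) ≠ 0 := by positivity
        rw [sub_zero, one_pow, div_sub_div _ _ hn1 hn2]
        norm_num
        exact Or.inl (by ring)
      rw [Finset.sum_congr rfl this]
      have := Finset.sum_range_sub' (f := fun n : ℕ => 1 / ((n:ℝ) + 1)) m
      simpa using this
    rw [htel]
    have hm : 0 < (m:ℝ) + 1 := by positivity
    simp [Real.log_zero]
    positivity
  · have hu0 : 0 ≤ 1 - p := by linarith
    have hu1 : 1 - p < 1 := by linarith
    have hs := key_hasSum hu0 hu1
    have hle : ∑ n ∈ Finset.range m, (1 - p) ^ (n + 2) / (((n:ℝ) + 1) * ((n:ℝ) + 2))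
        ≤ (1 - p) + (1 - (1 - p)) * Real.log (1 - (1 - p)) := by
      refine sum_le_hasSum _ (fun n _ => by positivity) hs
    have h2 : (1 : ℝ) - (1 - p) = p := by ring
    rw [h2] at hle
    linarith

/-- For a nonnegative random variable with cdf `F = cdf μ` and finite mean
`E[X] = ∫₀^∞ (1 - F x) dx`, for every `m ∈ ℕ` the cumulative entropy
`𝓒𝓔(X) = -∫₀^∞ (F x) log (F x) dx` satisfies the upper bound
`𝓒𝓔(X) ≤ E[X] - ∑_{n=1}^m μ_{1:n+1} / (n (n+1))`, where
`μ_{1:k} = ∫₀^∞ (1 - F x)^k dx` is the mean of the smallest order statistic. -/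
theorem ce_le_mean_sub_finite_sum_min_order_stats
    (μ : Measure ℝ) [IsProbabilityMeasure μ] (hnonneg : μ (Set.Iio 0) = 0)
    (hmean : IntegrableOn (fun x => 1 - cdf μ x) (Set.Ioi 0) volume) :
    ∀ m : ℕ,
      -∫ x in Set.Ioi (0 : ℝ), cdf μ x * Real.log (cdf μ x)
        ≤ (∫ x in Set.Ioi (0 : ℝ), (1 - cdf μ x))
            - ∑ n ∈ Finset.range m,
                (∫ x in Set.Ioi (0 : ℝ), (1 - cdf μ x) ^ (n + 2))
                  / (((n : ℝ) + 1) * ((n : ℝ) + 2)) := by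
  intro m
  set F : ℝ → ℝ := fun x => cdf μ x with hF
  have hF0 : ∀ x, 0 ≤ F x := fun x => cdf_nonneg μ x
  have hF1 : ∀ x, F x ≤ 1 := fun x => cdf_le_one μ x
  have hFmeas : Measurable F := (monotone_cdf (μ := μ)).measurable
  -- integrability of each power term
  have hint_g : ∀ n : ℕ, IntegrableOn (fun x => (1 - F x) ^ (n + 2)) (Set.Ioi 0) volume := by
    intro n
    refine hmean.mono' ((hFmeas.const_sub 1).pow_const _).aestronglyMeasurable ?_
    filter_upwards with x
    have h0 : 0 ≤ 1 - F x := by linarith [hF1 x]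
    rw [Real.norm_eq_abs, abs_of_nonneg (by positivity)]
    exact pow_le_of_le_one h0 (by linarith [hF0 x]) (by omega)
  -- integrability of F log F
  have hint_flog : IntegrableOn (fun x => F x * Real.log (F x)) (Set.Ioi 0) volume := by
    refine hmean.mono' (hFmeas.mul (Real.measurable_log.comp hFmeas)).aestronglyMeasurable ?_
    filter_upwards with x
    have h1 : F x * Real.log (F x) ≤ 0 :=
      mul_nonpos_of_nonneg_of_nonpos (hF0 x) (Real.log_nonpos (hF0 x) (hF1 x))
    have h2 := ptwise 0 (hF0 x) (hF1 x)
    simp only [Finset.range_zero, Finset.sum_empty, sub_zero] at h2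
    rw [Real.norm_eq_abs, abs_of_nonpos h1]
    linarith
  -- integrability of the combined RHS integrand
  have hint_comb : IntegrableOn (fun x => (1 - F x) - ∑ n ∈ Finset.range m,
      (1 - F x) ^ (n + 2) / (((n:ℝ) + 1) * ((n:ℝ) + 2))) (Set.Ioi 0) volume := by
    refine hmean.sub (integrable_finset_sum _ (fun n _ => ?_))
    exact (hint_g n).div_const _
  have hsum : ∑ n ∈ Finset.range m,
        (∫ x in Set.Ioi (0:ℝ), (1 - F x) ^ (n + 2)) / (((n:ℝ) + 1) * ((n:ℝ) + 2))
      = ∫ x in Set.Ioi (0:ℝ), ∑ n ∈ Finset.range m,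
        (1 - F x) ^ (n + 2) / (((n:ℝ) + 1) * ((n:ℝ) + 2)) := by
    rw [integral_finset_sum _ (fun n _ => (hint_g n).div_const _)]
    exact Finset.sum_congr rfl fun n _ => (integral_div _ _).symm
  rw [hsum, ← integral_sub hmean (integrable_finset_sum _ (fun n _ => (hint_g n).div_const _)),
    ← integral_neg]
  refine integral_mono hint_flog.neg hint_comb ?_
  intro x
  exact ptwise m (hF0 x) (hF1 x)
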